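/- arXiv:1605.07939 — 2 statements merged into one kernel-verified Lean document; each statement's English description precedes it below -/
import Mathlib

section
/- Let f : ℝ^d → ℝ ∪ {+∞} be a closed proper convex function, μ a finite positive measure, and suppose the integral functional I_f(x) = ∫ f(x(ξ)) dμ(ξ) is finite at some essentially bounded measurable x̄ with an L¹ bound: there exist r > 0 and β ∈ L¹(μ) with f(x̄(ξ) + x') ≤ β(ξ) for all |x'| ≤ r. If x is essentially bounded measurable with values in int L^∞(dom f)-sense, i.e. dist(x(ξ), ℝ^d \ dom f) ≥ r μ-a.e. for some r > 0, and f(x(·)) has an integrable upper bound, then I_f is norm-continuous at x on L^∞(μ; ℝ^d). -/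
open MeasureTheory Set
open scoped ENNReal

/-- Positive part of an extended real, as an `ℝ≥0∞`. -/
noncomputable def epos (e : EReal) : ℝ≥0∞ := if e = ⊤ then ⊤ else ENNReal.ofReal e.toReal

/-- The integral of an `EReal`-valued function, with the convention that it is `+∞`
unless the positive part is integrable. -/
noncomputable def eIntegral {α : Type*} [MeasurableSpace α] (μ : Measure α)
    (g : α → EReal) : EReal :=
  if (∫⁻ a, epos (g a) ∂μ) = ⊤ then ⊤
  else ((∫⁻ a, epos (g a) ∂μ : ℝ≥0∞) : EReal) - ((∫⁻ a, epos (-(g a)) ∂μ : ℝ≥0∞) : EReal)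

lemma epos_coe (c : ℝ) : epos (c : EReal) = ENNReal.ofReal c := by
  simp [epos]

lemma coe_ennreal_eq_coe_toReal {p : ℝ≥0∞} (hp : p ≠ ⊤) :
    (p : EReal) = ((p.toReal : ℝ) : EReal) := by
  rw [← EReal.toReal_coe_ennreal]
  exact (EReal.coe_toReal (by simpa using hp) (by simp)).symm

lemma lintegral_ofReal_ne_top' {α : Type*} [MeasurableSpace α] {μ : Measure α}
    {φ : α → ℝ} (hφ : Integrable φ μ) : (∫⁻ a, ENNReal.ofReal (φ a) ∂μ) ≠ ⊤ :=
  ((lintegral_ofReal_le_lintegral_enorm φ).trans_lt hφ.2).ne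

lemma eIntegral_eq_integral {α : Type*} [MeasurableSpace α] (μ : Measure α)
    (h : α → EReal) (φ : α → ℝ) (hφ : Integrable φ μ)
    (hae : ∀ᵐ a ∂μ, h a = (φ a : EReal)) :
    eIntegral μ h = ((∫ a, φ a ∂μ : ℝ) : EReal) := by
  have h1 : (∫⁻ a, epos (h a) ∂μ) = ∫⁻ a, ENNReal.ofReal (φ a) ∂μ :=
    lintegral_congr_ae (hae.mono fun a ha => by simp only []; rw [ha, epos_coe])
  have h2 : (∫⁻ a, epos (-h a) ∂μ) = ∫⁻ a, ENNReal.ofReal (-φ a) ∂μ :=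
    lintegral_congr_ae (hae.mono fun a ha => by
      simp only []; rw [ha, ← EReal.coe_neg, epos_coe])
  have hfin1 := lintegral_ofReal_ne_top' hφ
  have hfin2 := lintegral_ofReal_ne_top' hφ.neg
  simp only [Integrable.neg, Pi.neg_apply] at hfin2
  rw [eIntegral, h1, h2, if_neg hfin1,
    integral_eq_lintegral_pos_part_sub_lintegral_neg_part hφ,
    coe_ennreal_eq_coe_toReal hfin1, coe_ennreal_eq_coe_toReal hfin2, ← EReal.coe_sub]

/-- Norm-continuity of the integral functional `I_f` on `L^∞(μ; ℝ^d)` at points lying in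
the `L^∞`-interior of the domain with an integrable upper bound. -/
theorem integral_functional_continuous_at
    {α : Type*} [MeasurableSpace α] (μ : Measure α) [IsFiniteMeasure μ]
    {d : ℕ} (f : (Fin d → ℝ) → EReal)
    -- f is closed proper convex
    (hlsc : LowerSemicontinuous f)
    (hcvx : ∀ x y : Fin d → ℝ, ∀ a b : ℝ, 0 ≤ a → 0 ≤ b → a + b = 1 →
      f (a • x + b • y) ≤ (a : EReal) * f x + (b : EReal) * f y)
    (hproper₁ : ∀ x, f x ≠ ⊥) (hproper₂ : ∃ x, f x ≠ ⊤)
    -- I_f is finite at some essentially bounded x̄ with an L¹ upper bound around x̄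
    (xb : α → Fin d → ℝ) (hxb : MemLp xb ⊤ μ)
    (hfin : ∃ c : ℝ, eIntegral μ (fun ξ => f (xb ξ)) = (c : EReal))
    (rb : ℝ) (hrb : 0 < rb) (β : α → ℝ) (hβ : Integrable β μ)
    (hbound : ∀ᵐ ξ ∂μ, ∀ x' : Fin d → ℝ, ‖x'‖ ≤ rb → f (xb ξ + x') ≤ (β ξ : EReal))
    -- x is essentially bounded with dist(x(ξ), ℝ^d \ dom f) ≥ r a.e. ...
    (x : α → Fin d → ℝ) (hx : MemLp x ⊤ μ)
    (r : ℝ) (hr : 0 < r)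
    (hint : ∀ᵐ ξ ∂μ, ∀ y : Fin d → ℝ, dist y (x ξ) < r → f y ≠ ⊤)
    -- ... and f(x(·)) has an integrable upper bound
    (γ : α → ℝ) (hγ : Integrable γ μ)
    (hxbound : ∀ᵐ ξ ∂μ, f (x ξ) ≤ (γ ξ : EReal)) :
    ContinuousAt (fun u : Lp (Fin d → ℝ) ⊤ μ => eIntegral μ (fun ξ => f (u ξ)))
      (hx.toLp x) := by
  classical
  have hfm : Measurable f := hlsc.measurable
  set g : (Fin d → ℝ) → ℝ := fun v => (f v).toReal with hgdef
  have hgm : Measurable g := measurable_ereal_toReal.comp hfm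
  set S : Set (Fin d → ℝ) := {v | f v ≠ ⊤} with hSdef
  -- convexity of the domain S
  have hSconv : Convex ℝ S := by
    intro v hv w hw a b ha hb hab
    have h := hcvx v w a b ha hb hab
    have hv' : f v = ((g v : ℝ) : EReal) := (EReal.coe_toReal hv (hproper₁ v)).symm
    have hw' : f w = ((g w : ℝ) : EReal) := (EReal.coe_toReal hw (hproper₁ w)).symm
    have hrhs : (a : EReal) * f v + (b : EReal) * f w = ((a * g v + b * g w : ℝ) : EReal) := by
      rw [hv', hw']; norm_cast
    rw [hrhs] at h
    exact (h.trans_lt (EReal.coe_lt_top _)).ne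
  -- g is convex on the interior of S
  have hgcvx : ConvexOn ℝ (interior S) g := by
    refine ⟨hSconv.interior, fun v hv w hw a b ha hb hab => ?_⟩
    have h := hcvx v w a b ha hb hab
    have hv1 : f v ≠ ⊤ := interior_subset hv
    have hw1 : f w ≠ ⊤ := interior_subset hw
    have hrhs : (a : EReal) * f v + (b : EReal) * f w = ((a * g v + b * g w : ℝ) : EReal) := by
      rw [← EReal.coe_toReal hv1 (hproper₁ v), ← EReal.coe_toReal hw1 (hproper₁ w)]; norm_cast
    rw [hrhs] at h
    have := EReal.toReal_le_toReal h (hproper₁ _) (EReal.coe_ne_top _)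
    simpa only [EReal.toReal_coe, smul_eq_mul] using this
  have hgcont : ContinuousOn g (interior S) := hgcvx.continuousOn isOpen_interior
  -- essential bound on x
  set N : ℝ := (eLpNorm x ⊤ μ).toReal with hNdef
  have hxN : ∀ᵐ ξ ∂μ, ‖x ξ‖ ≤ N := by
    filter_upwards [ae_le_eLpNormEssSup (f := x) (μ := μ)] with ξ h
    have h2 : (‖x ξ‖₊ : ℝ≥0∞) ≤ eLpNorm x ⊤ μ := by rwa [eLpNorm_exponent_top]
    have := ENNReal.toReal_mono hx.2.ne h2
    simpa [hNdef] using this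
  -- the compact set K
  set K : Set (Fin d → ℝ) := {v | ‖v‖ ≤ N + r / 4 ∧ ∀ w, dist w v < r / 2 → f w ≠ ⊤} with hKdef
  have hKclosed : IsClosed K := by
    have : K = (Metric.closedBall (0 : Fin d → ℝ) (N + r / 4)) ∩
        (⋃ w ∈ Sᶜ, Metric.ball w (r / 2))ᶜ := by
      ext v
      simp only [hKdef, mem_setOf_eq, mem_inter_iff, Metric.mem_closedBall, dist_zero_right,
        mem_compl_iff, mem_iUnion, Metric.mem_ball, not_exists, hSdef, not_not]
      constructor
      · rintro ⟨h1, h2⟩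
        exact ⟨h1, fun w hw hvw => h2 w (by rwa [dist_comm] at hvw) hw⟩
      · rintro ⟨h1, h2⟩
        exact ⟨h1, fun w hw hfw => h2 w hfw (by rwa [dist_comm] at hw)⟩
    rw [this]
    exact Metric.isClosed_closedBall.inter (isOpen_biUnion fun w _ => Metric.isOpen_ball).isClosed_compl
  have hKcompact : IsCompact K := by
    refine Metric.isCompact_of_isClosed_isBounded hKclosed ?_
    exact (Metric.isBounded_closedBall (x := (0 : Fin d → ℝ)) (r := N + r / 4)).subset
      (fun v hv => by simpa [Metric.mem_closedBall, dist_zero_right] using hv.1)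
  have hKT : K ⊆ interior S := by
    intro v hv
    have hsub : Metric.ball v (r / 2) ⊆ S := fun w hw => hv.2 w (by simpa [dist_comm] using hw)
    exact (interior_maximal hsub Metric.isOpen_ball) (Metric.mem_ball_self (by linarith))
  obtain ⟨C, hC⟩ := hKcompact.exists_bound_of_continuousOn (hgcont.mono hKT)
  have hUC := hKcompact.uniformContinuousOn_of_continuous (hgcont.mono hKT)
  -- a.e. membership of neighborhoods of x ξ in K
  have hmem : ∀ᵐ ξ ∂μ, ∀ v : Fin d → ℝ, dist v (x ξ) ≤ r / 4 → v ∈ K := by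
    filter_upwards [hxN, hint] with ξ h1 h2
    intro v hv
    constructor
    · have h4 : ‖v‖ - ‖x ξ‖ ≤ ‖v - x ξ‖ := norm_sub_norm_le _ _
      rw [dist_eq_norm] at hv
      linarith
    · intro w hw
      apply h2
      calc dist w (x ξ) ≤ dist w v + dist v (x ξ) := dist_triangle _ _ _
        _ < r / 2 + r / 4 := by linarith
        _ < r := by linarith
  set x₀ : Lp (Fin d → ℝ) ⊤ μ := hx.toLp x with hx₀def
  have hx₀ : (x₀ : α → Fin d → ℝ) =ᵐ[μ] x := hx.coeFn_toLp
  -- a.e. distance control for Lp elements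
  have hdist : ∀ u : Lp (Fin d → ℝ) ⊤ μ, ∀ᵐ ξ ∂μ, ‖u ξ - x₀ ξ‖ ≤ dist u x₀ := by
    intro u
    have h1 : ∀ᵐ ξ ∂μ, ‖(u - x₀ : Lp (Fin d → ℝ) ⊤ μ) ξ‖₊ ≤ eLpNormEssSup (u - x₀ : Lp (Fin d → ℝ) ⊤ μ) μ :=
      ae_le_eLpNormEssSup
    filter_upwards [h1, Lp.coeFn_sub u x₀] with ξ hξ hs
    have hfin : eLpNorm (u - x₀ : Lp (Fin d → ℝ) ⊤ μ) ⊤ μ ≠ ⊤ := Lp.eLpNorm_ne_top _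
    rw [eLpNorm_exponent_top] at hfin
    have := ENNReal.toReal_mono hfin hξ
    rw [hs] at this
    simpa [dist_eq_norm, Lp.norm_def, eLpNorm_exponent_top] using this
  -- pointwise facts for u close to x₀
  have hptwise : ∀ u : Lp (Fin d → ℝ) ⊤ μ, dist u x₀ ≤ r / 8 →
      ∀ᵐ ξ ∂μ, u ξ ∈ K ∧ f (u ξ) = ((g (u ξ) : ℝ) : EReal) := by
    intro u hu
    filter_upwards [hdist u, hx₀, hmem] with ξ h1 h2 h3
    have hk : u ξ ∈ K := by
      apply h3
      rw [dist_eq_norm, ← h2]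
      linarith
    refine ⟨hk, ?_⟩
    have : f (u ξ) ≠ ⊤ := interior_subset (hKT hk)
    exact (EReal.coe_toReal this (hproper₁ _)).symm
  have hInt : ∀ u : Lp (Fin d → ℝ) ⊤ μ, dist u x₀ ≤ r / 8 →
      Integrable (fun ξ => g (u ξ)) μ := by
    intro u hu
    have hmeas : AEStronglyMeasurable (fun ξ => g (u ξ)) μ :=
      (hgm.comp_aemeasurable (Lp.aestronglyMeasurable u).aemeasurable).aestronglyMeasurable
    refine ⟨hmeas, HasFiniteIntegral.of_bounded (C := C) ?_⟩
    filter_upwards [hptwise u hu] with ξ hξ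
    exact hC _ hξ.1
  set G : Lp (Fin d → ℝ) ⊤ μ → ℝ := fun u => ∫ ξ, g (u ξ) ∂μ with hGdef
  have hFeq : ∀ u : Lp (Fin d → ℝ) ⊤ μ, dist u x₀ ≤ r / 8 →
      eIntegral μ (fun ξ => f (u ξ)) = ((G u : ℝ) : EReal) := fun u hu =>
    eIntegral_eq_integral μ _ _ (hInt u hu) ((hptwise u hu).mono fun ξ h => h.2)
  -- continuity of G at x₀
  have hGcont : ContinuousAt G x₀ := by
    rw [Metric.continuousAt_iff]
    intro ε hε
    set m : ℝ := (μ univ).toReal + 1 with hmdef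
    have hm : 0 < m := by rw [hmdef]; positivity
    obtain ⟨δ, hδ0, hδ⟩ := Metric.uniformContinuousOn_iff.mp hUC (ε / (2 * m)) (div_pos hε (by linarith))
    refine ⟨min δ (r / 8), lt_min hδ0 (by linarith), fun u hu => ?_⟩
    have hu1 : dist u x₀ ≤ r / 8 := le_of_lt (lt_of_lt_of_le hu (min_le_right _ _))
    have hu2 : dist u x₀ < δ := lt_of_lt_of_le hu (min_le_left _ _)
    have hx₀0 : dist x₀ x₀ ≤ r / 8 := by simp; linarith
    have key : ∀ᵐ ξ ∂μ, ‖g (u ξ) - g (x₀ ξ)‖ ≤ ε / (2 * m) := by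
      filter_upwards [hptwise u hu1, hptwise x₀ hx₀0, hdist u] with ξ h1 h2 h3
      have hd : dist (u ξ) (x₀ ξ) < δ := by
        rw [dist_eq_norm]; exact lt_of_le_of_lt h3 hu2
      have := hδ _ h1.1 _ h2.1 hd
      rw [Real.dist_eq] at this
      exact le_of_lt (by simpa using this)
    have hsub : Integrable (fun ξ => g (u ξ) - g (x₀ ξ)) μ := (hInt u hu1).sub (hInt x₀ hx₀0)
    have hGsub : G u - G x₀ = ∫ ξ, (g (u ξ) - g (x₀ ξ)) ∂μ :=
      (integral_sub (hInt u hu1) (hInt x₀ hx₀0)).symm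
    have hbnd : ‖∫ ξ, (g (u ξ) - g (x₀ ξ)) ∂μ‖ ≤ ε / (2 * m) * (μ univ).toReal :=
      norm_integral_le_of_norm_le_const key
    rw [Real.dist_eq, ← Real.norm_eq_abs, hGsub]
    calc ‖∫ ξ, (g (u ξ) - g (x₀ ξ)) ∂μ‖ ≤ ε / (2 * m) * (μ univ).toReal := hbnd
      _ < ε := by
        have h1 : (μ univ).toReal < m := by simp [hmdef]
        have h2 : 0 < ε / (2 * m) := div_pos hε (by linarith)
        have h3 : ε / (2 * m) * (μ univ).toReal < ε / (2 * m) * m := by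
          rcases eq_or_lt_of_le (ENNReal.toReal_nonneg (a := μ univ)) with h | h
          · rw [← h]; simpa using mul_pos h2 hm
          · exact (mul_lt_mul_iff_right₀ h2).mpr h1
        calc ε / (2 * m) * (μ univ).toReal < ε / (2 * m) * m := h3
          _ = ε / 2 := by field_simp
          _ < ε := by linarith
  -- conclude
  have hcoe : ContinuousAt (fun u : Lp (Fin d → ℝ) ⊤ μ => ((G u : ℝ) : EReal)) x₀ :=
    (continuous_coe_real_ereal.continuousAt).comp hGcont
  apply hcoe.congr
  filter_upwards [Metric.closedBall_mem_nhds x₀ (show (0:ℝ) < r / 8 by linarith)] with u hu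
  exact (hFeq u (by simpa [Metric.mem_closedBall] using hu)).symm
end

section
/- Let g be a closed proper convex function on the dual U of a Banach space Y (with weak* topology). Then the recession function of g equals the indicator of {0} (i.e. g^∞ = δ_{{0}}, meaning g is coercive) if and only if the domain of g* is dense in Y. -/
/-- The recession function of `g` based at `u₀`. -/
noncomputable def recFun {E : Type*} [AddCommMonoid E] [SMul ℝ E]
    (g : E → EReal) (u₀ u : E) : EReal :=
  ⨆ α : {a : ℝ // 0 < a}, (g (u₀ + (α : ℝ) • u) - g u₀) * (((α : ℝ)⁻¹ : ℝ) : EReal)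

/-- The conjugate of a function on the weak* dual of `Y`, as a function on `Y`. -/
noncomputable def conjDual {Y : Type*} [NormedAddCommGroup Y] [NormedSpace ℝ Y]
    (g : WeakDual ℝ Y → EReal) (y : Y) : EReal :=
  ⨆ u : WeakDual ℝ Y, ((u y : ℝ) : EReal) - g u

open Topology

section Aux

variable {Y : Type*} [NormedAddCommGroup Y] [NormedSpace ℝ Y]

/-- evaluation at `y` as a linear map on the weak dual. -/
noncomputable def evalLM (y : Y) : WeakDual ℝ Y →ₗ[ℝ] ℝ where
  toFun u := u y
  map_add' _ _ := rfl
  map_smul' _ _ := rfl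

/-- Every continuous linear functional on the weak-* dual is an evaluation. -/
theorem dual_eval (F : WeakDual ℝ Y →L[ℝ] ℝ) : ∃ y : Y, ∀ u : WeakDual ℝ Y, F u = u y := by
  have hb := LinearMap.hasBasis_weakBilin (topDualPairing ℝ Y)
  have hmem : F ⁻¹' (Metric.ball (0:ℝ) 1) ∈ 𝓝 (0 : WeakDual ℝ Y) := by
    apply F.continuous.continuousAt.preimage_mem_nhds
    simpa using Metric.ball_mem_nhds (0:ℝ) one_pos
  obtain ⟨U, hU, hUsub⟩ := hb.mem_iff.1 hmem
  obtain ⟨t, r, hr, rfl⟩ := (topDualPairing ℝ Y).toSeminormFamily.basisSets_iff.1 hU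
  have hker : ⨅ i : t, LinearMap.ker (evalLM (i : Y)) ≤
      LinearMap.ker (F : WeakDual ℝ Y →ₗ[ℝ] ℝ) := by
    intro u hu
    simp only [Submodule.mem_iInf, LinearMap.mem_ker] at hu ⊢
    have hz : ∀ c : ℝ, c • u ∈ (t.sup (topDualPairing ℝ Y).toSeminormFamily).ball 0 r := by
      intro c
      refine (Seminorm.mem_ball_zero (p := t.sup (topDualPairing ℝ Y).toSeminormFamily)).2 ?_
      refine lt_of_le_of_lt (Seminorm.finset_sup_apply_le le_rfl fun i hi => ?_) hr
      have h0 : u i = 0 := hu ⟨i, hi⟩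
      show ‖c * u i‖ ≤ 0
      rw [h0, mul_zero, norm_zero]
    have hlt : ∀ c : ℝ, |c| * |F u| < 1 := by
      intro c
      have := hUsub (hz c)
      change F (c • u) ∈ Metric.ball (0:ℝ) 1 at this
      simpa [abs_mul, Real.dist_eq] using this
    by_contra h
    have hFu : F u ≠ 0 := h
    have := hlt (2 / |F u|)
    rw [abs_div, abs_abs, abs_two, div_mul_cancel₀] at this
    · norm_num at this
    · exact abs_ne_zero.2 hFu
  have hspan := mem_span_of_iInf_ker_le_ker hker
  obtain ⟨c, hc⟩ := (Submodule.mem_span_range_iff_exists_fun ℝ).1 hspan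
  refine ⟨∑ i : t, c i • (i : Y), fun u => ?_⟩
  have h1 := congrFun (congrArg (fun (L : WeakDual ℝ Y →ₗ[ℝ] ℝ) => (L : WeakDual ℝ Y → ℝ)) hc) u
  simp only [LinearMap.coe_sum, Finset.sum_apply, LinearMap.smul_apply] at h1
  have h2 : u (∑ i : t, c i • (i : Y)) = ∑ i : t, c i • (evalLM (i : Y) u) := by
    rw [map_sum]
    congr 1
    ext i
    rw [map_smul]
    rfl
  rw [h2, h1]
  rfl

instance : LocallyConvexSpace ℝ (WeakDual ℝ Y) :=
  inferInstanceAs (LocallyConvexSpace ℝ (WeakBilin (topDualPairing ℝ Y)))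

/-- Separation of a point below the graph from the epigraph. -/
theorem sep_epi (g : WeakDual ℝ Y → EReal)
    (hlsc : LowerSemicontinuous g)
    (hcvx : Convex ℝ {p : WeakDual ℝ Y × ℝ | g p.1 ≤ (p.2 : EReal)})
    (hproper₁ : ∀ u, g u ≠ ⊥)
    (u₀ : WeakDual ℝ Y) (hu₀ : g u₀ ≠ ⊤)
    (v : WeakDual ℝ Y) (c : ℝ) (h : (c : EReal) < g v) :
    ∃ (y : Y) (k d : ℝ), k ≤ 0 ∧
      (∀ (w : WeakDual ℝ Y) (s : ℝ), g w ≤ (s : EReal) → w y + k * s < d) ∧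
      d < v y + k * c := by
  have hcl : IsClosed {p : WeakDual ℝ Y × ℝ | g p.1 ≤ (p.2 : EReal)} := by
    rw [← isOpen_compl_iff, isOpen_iff_mem_nhds]
    rintro ⟨w, s⟩ hp
    simp only [Set.mem_compl_iff, Set.mem_setOf_eq, not_le] at hp
    obtain ⟨z, hz1, hz2⟩ := exists_between hp
    lift z to ℝ using ⟨ne_top_of_lt hz2, ne_bot_of_gt hz1⟩
    have h1 : ∀ᶠ w' in 𝓝 w, (z : EReal) < g w' := hlsc w _ hz2
    have h2 : {t : ℝ | t < z} ∈ 𝓝 s := Iio_mem_nhds (by exact_mod_cast hz1)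
    have := Filter.prod_mem_prod h1 h2
    rw [← nhds_prod_eq] at this
    apply Filter.mem_of_superset this
    rintro ⟨w', t⟩ ⟨hw, ht⟩
    simp only [Set.mem_setOf_eq] at hw ht
    simp only [Set.mem_compl_iff, Set.mem_setOf_eq, not_le]
    exact lt_trans (by exact_mod_cast ht) hw
  have hnot : ((v, c) : WeakDual ℝ Y × ℝ) ∉ {p : WeakDual ℝ Y × ℝ | g p.1 ≤ (p.2 : EReal)} := by
    simp only [Set.mem_setOf_eq, not_le]; exact h
  obtain ⟨f, d', hfx, hfb⟩ := geometric_hahn_banach_point_closed hcvx hcl hnot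
  obtain ⟨y', hy'⟩ := dual_eval (f.comp (ContinuousLinearMap.inl ℝ (WeakDual ℝ Y) ℝ))
  set k' : ℝ := f (0, 1) with hk'
  have hsplit : ∀ (w : WeakDual ℝ Y) (s : ℝ), f (w, s) = w y' + s * k' := by
    intro w s
    have h0 : ((w, s) : WeakDual ℝ Y × ℝ) = (w, (0:ℝ)) + s • ((0 : WeakDual ℝ Y), (1:ℝ)) := by
      simp [Prod.ext_iff]
    rw [h0, map_add, map_smul, smul_eq_mul]
    congr 1
    have := hy' w
    rw [ContinuousLinearMap.comp_apply] at this
    exact this.symm ▸ (by rfl :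
      (f.comp (ContinuousLinearMap.inl ℝ (WeakDual ℝ Y) ℝ)) w = f (w, 0)).symm
  have hG0 : g u₀ = (((g u₀).toReal : ℝ) : EReal) := (EReal.coe_toReal hu₀ (hproper₁ u₀)).symm
  set G0 : ℝ := (g u₀).toReal with hG0def
  have hepi' : ∀ (w : WeakDual ℝ Y) (s : ℝ), g w ≤ (s : EReal) → d' < w y' + s * k' := by
    intro w s hws
    have := hfb (w, s) hws
    rwa [hsplit] at this
  have hknn : 0 ≤ k' := by
    by_contra hpos
    push_neg at hpos
    have hbig : ∀ s : ℝ, G0 ≤ s → d' < u₀ y' + s * k' := by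
      intro s hs
      exact hepi' u₀ s (by rw [hG0]; exact_mod_cast hs)
    have h1 := hbig (max G0 ((d' - u₀ y' - 1) / k')) (le_max_left _ _)
    have h2 : (max G0 ((d' - u₀ y' - 1) / k')) * k' ≤ d' - u₀ y' - 1 := by
      rw [← div_le_iff_of_neg hpos]
      exact le_max_right _ _
    linarith
  refine ⟨-y', -k', -d', neg_nonpos.2 hknn, ?_, ?_⟩
  · intro w s hws
    have h1 := hepi' w s hws
    have h2 : w (-y') = -(w y') := by rw [map_neg]
    rw [h2]; linarith
  · have h1 : f (v, c) < d' := hfx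
    rw [hsplit] at h1
    have h2 : v (-y') = -(v y') := by rw [map_neg]
    rw [h2]; linarith

/-- From a uniform affine bound we get a bound on the conjugate. -/
theorem conj_le_of_bound (g : WeakDual ℝ Y → EReal) (hproper₁ : ∀ u, g u ≠ ⊥)
    (y : Y) (K : ℝ)
    (h : ∀ (w : WeakDual ℝ Y) (s : ℝ), g w ≤ (s : EReal) → w y - s ≤ K) :
    conjDual g y ≤ (K : EReal) := by
  refine iSup_le fun w => ?_
  by_cases hw : g w = ⊤
  · rw [hw, EReal.sub_top]; exact bot_le
  · obtain ⟨G, hG⟩ : ∃ G : ℝ, g w = (G : EReal) :=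
      ⟨(g w).toReal, (EReal.coe_toReal hw (hproper₁ w)).symm⟩
    rw [hG, ← EReal.coe_sub, EReal.coe_le_coe_iff]
    exact h w G (le_of_eq hG)

/-- The conjugate domain is nonempty: `g` has a continuous affine minorant. -/
theorem exists_dom (g : WeakDual ℝ Y → EReal)
    (hlsc : LowerSemicontinuous g)
    (hcvxE : Convex ℝ {p : WeakDual ℝ Y × ℝ | g p.1 ≤ (p.2 : EReal)})
    (hproper₁ : ∀ u, g u ≠ ⊥)
    (u₀ : WeakDual ℝ Y) (hu₀ : g u₀ ≠ ⊤) :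
    ∃ (yb : Y) (K : ℝ), ∀ (w : WeakDual ℝ Y) (s : ℝ), g w ≤ (s : EReal) → w yb - s ≤ K := by
  have hG0 : g u₀ = (((g u₀).toReal : ℝ) : EReal) := (EReal.coe_toReal hu₀ (hproper₁ u₀)).symm
  set G0 : ℝ := (g u₀).toReal with hG0def
  have hc : ((G0 - 1 : ℝ) : EReal) < g u₀ := by
    rw [hG0]; exact_mod_cast (by linarith : G0 - 1 < G0)
  obtain ⟨y, k, d, hk, hepi, hpt⟩ := sep_epi g hlsc hcvxE hproper₁ u₀ hu₀ u₀ (G0 - 1) hc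
  have hklt : k < 0 := by
    rcases hk.lt_or_eq with h | h
    · exact h
    · exfalso
      have h1 := hepi u₀ G0 (le_of_eq hG0)
      rw [h] at h1 hpt
      simp only [zero_mul, add_zero] at h1 hpt
      linarith
  have hmpos : 0 < -k := neg_pos.2 hklt
  refine ⟨(-k)⁻¹ • y, d / (-k), ?_⟩
  intro w s hws
  have h1 := hepi w s hws
  have happ : w ((-k)⁻¹ • y) = (-k)⁻¹ * w y := by rw [map_smul]; rfl
  rw [happ, div_eq_mul_inv]
  have hjk : (-k)⁻¹ * k = -1 := by rw [inv_neg, neg_mul, inv_mul_cancel₀ hklt.ne]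
  have h2 : (-k)⁻¹ * (w y + k * s) < (-k)⁻¹ * d :=
    mul_lt_mul_of_pos_left h1 (inv_pos.2 hmpos)
  have h3 : (-k)⁻¹ * (w y + k * s) = (-k)⁻¹ * w y + ((-k)⁻¹ * k) * s := by ring
  rw [h3, hjk] at h2
  linarith

/-- Key upper bound on the recession function from a bound on the conjugate domain. -/
theorem recFun_le (g : WeakDual ℝ Y → EReal)
    (hlsc : LowerSemicontinuous g)
    (hcvxE : Convex ℝ {p : WeakDual ℝ Y × ℝ | g p.1 ≤ (p.2 : EReal)})
    (hproper₁ : ∀ u, g u ≠ ⊥)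
    (u₀ : WeakDual ℝ Y) (hu₀ : g u₀ ≠ ⊤)
    (u : WeakDual ℝ Y) (r : ℝ)
    (hD : ∀ y : Y, conjDual g y ≠ ⊤ → u y ≤ r) :
    recFun g u₀ u ≤ (r : EReal) := by
  have hG0 : g u₀ = (((g u₀).toReal : ℝ) : EReal) := (EReal.coe_toReal hu₀ (hproper₁ u₀)).symm
  set G0 : ℝ := (g u₀).toReal with hG0def
  refine iSup_le ?_
  rintro ⟨α, hα⟩
  show (g (u₀ + α • u) - g u₀) * ((α⁻¹ : ℝ) : EReal) ≤ (r : EReal)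
  by_cases hcase : g (u₀ + α • u) ≤ ((G0 + α * r : ℝ) : EReal)
  · obtain ⟨x, hx⟩ : ∃ x : ℝ, g (u₀ + α • u) = (x : EReal) :=
      ⟨(g (u₀ + α • u)).toReal,
        (EReal.coe_toReal (ne_top_of_le_ne_top (EReal.coe_ne_top _) hcase)
          (hproper₁ _)).symm⟩
    rw [hx, hG0, ← EReal.coe_sub, ← EReal.coe_mul, EReal.coe_le_coe_iff]
    have hxle : x ≤ G0 + α * r := by rw [hx] at hcase; exact_mod_cast hcase
    have h1 : (x - G0) * α⁻¹ ≤ (α * r) * α⁻¹ :=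
      mul_le_mul_of_nonneg_right (by linarith) (inv_nonneg.2 hα.le)
    rwa [mul_comm α r, mul_assoc, mul_inv_cancel₀ hα.ne', mul_one] at h1
  · exfalso
    push_neg at hcase
    obtain ⟨y, k, d, hk, hepi, hpt⟩ :=
      sep_epi g hlsc hcvxE hproper₁ u₀ hu₀ (u₀ + α • u) (G0 + α * r) hcase
    have hvy : (u₀ + α • u) y = u₀ y + α * u y := rfl
    rw [hvy] at hpt
    rcases hk.lt_or_eq with hklt | hkeq
    · -- k < 0 : separating functional gives a point of the domain violating the bound
      have hmpos : 0 < -k := neg_pos.2 hklt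
      have hj : 0 < (-k)⁻¹ := inv_pos.2 hmpos
      set yh : Y := (-k)⁻¹ • y with hyh
      have happ : ∀ w : WeakDual ℝ Y, w yh = (-k)⁻¹ * w y := fun w => by
        rw [hyh, map_smul]; rfl
      have hjk : (-k)⁻¹ * k = -1 := by rw [inv_neg, neg_mul, inv_mul_cancel₀ hklt.ne]
      have hb : ∀ (w : WeakDual ℝ Y) (s : ℝ), g w ≤ (s : EReal) → w yh - s ≤ d * (-k)⁻¹ := by
        intro w s hws
        have h1 := hepi w s hws
        have h2 : (-k)⁻¹ * (w y + k * s) < (-k)⁻¹ * d := mul_lt_mul_of_pos_left h1 hj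
        have h3 : (-k)⁻¹ * (w y + k * s) = (-k)⁻¹ * w y + ((-k)⁻¹ * k) * s := by ring
        rw [h3, hjk] at h2
        rw [happ]
        linarith
      have hyhD : conjDual g yh ≠ ⊤ :=
        ne_top_of_le_ne_top (EReal.coe_ne_top _)
          (conj_le_of_bound g hproper₁ yh (d * (-k)⁻¹) hb)
      have h2 := hD yh hyhD
      rw [happ] at h2
      have h3 := hb u₀ G0 (le_of_eq hG0)
      rw [happ] at h3
      -- from hpt : d < u₀ y + α * u y + k * (G0 + α * r)
      have h4 : (-k)⁻¹ * d < (-k)⁻¹ * (u₀ y + α * u y + k * (G0 + α * r)) :=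
        mul_lt_mul_of_pos_left hpt hj
      have h5 : (-k)⁻¹ * (u₀ y + α * u y + k * (G0 + α * r)) =
          (-k)⁻¹ * u₀ y + α * ((-k)⁻¹ * u y) + ((-k)⁻¹ * k) * (G0 + α * r) := by ring
      rw [h5, hjk] at h4
      have h6 : α * ((-k)⁻¹ * u y) ≤ α * r := mul_le_mul_of_nonneg_left h2 hα.le
      linarith
    · -- k = 0 : the domain is unbounded in the direction y
      obtain ⟨yb, K, hbar⟩ := exists_dom g hlsc hcvxE hproper₁ u₀ hu₀
      rw [hkeq] at hepi hpt
      simp only [zero_mul, add_zero] at hepi hpt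
      have hu0y : u₀ y < d := by
        have := hepi u₀ G0 (le_of_eq hG0); linarith
      have huy : 0 < u y := by
        by_contra hne
        push_neg at hne
        have : α * u y ≤ 0 := mul_nonpos_of_nonneg_of_nonpos hα.le hne
        linarith
      have hmem : ∀ t : ℝ, 0 < t → conjDual g (yb + t • y) ≠ ⊤ := by
        intro t ht
        refine ne_top_of_le_ne_top (EReal.coe_ne_top (K + t * d))
          (conj_le_of_bound g hproper₁ _ _ ?_)
        intro w s hws
        have h1 := hbar w s hws
        have h2 := hepi w s hws
        have h3 : w (yb + t • y) = w yb + t * w y := by rw [map_add, map_smul]; rfl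
        have h4 : t * w y ≤ t * d := mul_le_mul_of_nonneg_left h2.le ht.le
        rw [h3]; linarith
      set t : ℝ := max 1 ((r - u yb + 1) / u y) with htdef
      have ht : 0 < t := lt_of_lt_of_le one_pos (le_max_left _ _)
      have h5 := hD _ (hmem t ht)
      have h6 : u (yb + t • y) = u yb + t * u y := by rw [map_add, map_smul]; rfl
      rw [h6] at h5
      have h7 : ((r - u yb + 1) / u y) * u y ≤ t * u y :=
        mul_le_mul_of_nonneg_right (le_max_right _ _) huy.le
      rw [div_mul_cancel₀ _ huy.ne'] at h7
      linarith

/-- Lower bound: the recession function dominates evaluations on the conjugate domain. -/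
theorem rec_ge (g : WeakDual ℝ Y → EReal)
    (hproper₁ : ∀ u, g u ≠ ⊥)
    (u₀ : WeakDual ℝ Y) (hu₀ : g u₀ ≠ ⊤)
    (u : WeakDual ℝ Y) (y : Y) (hy : conjDual g y ≠ ⊤) :
    ((u y : ℝ) : EReal) ≤ recFun g u₀ u := by
  by_contra hlt
  push_neg at hlt
  obtain ⟨q, hq1, hq2⟩ := exists_between hlt
  lift q to ℝ using ⟨ne_top_of_lt hq2, ne_bot_of_gt hq1⟩
  have hq2' : q < u y := by exact_mod_cast hq2
  have hC : conjDual g y ≤ ((conjDual g y).toReal : EReal) := EReal.le_coe_toReal hy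
  set C : ℝ := (conjDual g y).toReal with hCdef
  have hlow : ∀ w : WeakDual ℝ Y, ((w y - C : ℝ) : EReal) ≤ g w := by
    intro w
    have h1 : ((w y : ℝ) : EReal) - g w ≤ (C : EReal) :=
      le_trans (le_iSup (fun u' : WeakDual ℝ Y => ((u' y : ℝ) : EReal) - g u') w) hC
    by_cases hw : g w = ⊤
    · rw [hw]; exact le_top
    · obtain ⟨G, hG⟩ : ∃ G : ℝ, g w = (G : EReal) :=
        ⟨(g w).toReal, (EReal.coe_toReal hw (hproper₁ w)).symm⟩
      rw [hG, ← EReal.coe_sub, EReal.coe_le_coe_iff] at h1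
      rw [hG, EReal.coe_le_coe_iff]
      linarith
  have hG0 : g u₀ = (((g u₀).toReal : ℝ) : EReal) := (EReal.coe_toReal hu₀ (hproper₁ u₀)).symm
  set G0 : ℝ := (g u₀).toReal with hG0def
  set ε : ℝ := u y - q with hεdef
  have hε : 0 < ε := by rw [hεdef]; linarith
  set α : ℝ := max 1 (|u₀ y - C - G0| / ε) with hαdef
  have hα : 0 < α := lt_of_lt_of_le one_pos (le_max_left _ _)
  have habs : |u₀ y - C - G0| ≤ α * ε := by
    have h1 : |u₀ y - C - G0| / ε ≤ α := le_max_right _ _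
    calc |u₀ y - C - G0| = (|u₀ y - C - G0| / ε) * ε := by field_simp
    _ ≤ α * ε := mul_le_mul_of_nonneg_right h1 hε.le
  have hterm : ((q : ℝ) : EReal) ≤ (g (u₀ + α • u) - g u₀) * ((α⁻¹ : ℝ) : EReal) := by
    by_cases htop : g (u₀ + α • u) = ⊤
    · rw [htop, hG0, EReal.top_sub_coe, EReal.top_mul_coe_of_pos (inv_pos.2 hα)]
      exact le_top
    · obtain ⟨x, hx⟩ : ∃ x : ℝ, g (u₀ + α • u) = (x : EReal) :=
        ⟨(g (u₀ + α • u)).toReal, (EReal.coe_toReal htop (hproper₁ _)).symm⟩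
      have hxge : u₀ y + α * u y - C ≤ x := by
        have h1 := hlow (u₀ + α • u)
        rw [hx] at h1
        have h2 : (u₀ + α • u) y = u₀ y + α * u y := rfl
        rw [h2] at h1
        exact_mod_cast h1
      rw [hx, hG0, ← EReal.coe_sub, ← EReal.coe_mul, EReal.coe_le_coe_iff]
      have hge : -(α * ε) ≤ u₀ y - C - G0 := by
        have := abs_le.1 (le_refl |u₀ y - C - G0|)
        have h1 := neg_abs_le (u₀ y - C - G0)
        linarith
      have h3 : (u₀ y - C - G0 + α * u y) * α⁻¹ ≤ (x - G0) * α⁻¹ :=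
        mul_le_mul_of_nonneg_right (by linarith) (inv_nonneg.2 hα.le)
      have h4 : (-(α * ε) + α * u y) * α⁻¹ ≤ (u₀ y - C - G0 + α * u y) * α⁻¹ :=
        mul_le_mul_of_nonneg_right (by linarith) (inv_nonneg.2 hα.le)
      have h5 : (-(α * ε) + α * u y) * α⁻¹ = (u y - ε) * (α * α⁻¹) := by ring
      rw [mul_inv_cancel₀ hα.ne', mul_one] at h5
      have h6 : u y - ε = q := by rw [hεdef]; ring
      rw [h6] at h5
      linarith
  have := le_trans hterm
    (le_iSup (fun β : {a : ℝ // 0 < a} =>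
      (g (u₀ + (β : ℝ) • u) - g u₀) * (((β : ℝ)⁻¹ : ℝ) : EReal)) ⟨α, hα⟩)
  exact absurd this (not_le.2 hq1)

/-- The recession function vanishes at `0`. -/
theorem rec_zero (g : WeakDual ℝ Y → EReal)
    (hproper₁ : ∀ u, g u ≠ ⊥)
    (u₀ : WeakDual ℝ Y) (hu₀ : g u₀ ≠ ⊤) :
    recFun g u₀ (0 : WeakDual ℝ Y) = 0 := by
  have hG0 : g u₀ = (((g u₀).toReal : ℝ) : EReal) := (EReal.coe_toReal hu₀ (hproper₁ u₀)).symm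
  have hconst : ∀ β : {a : ℝ // 0 < a},
      (g (u₀ + (β : ℝ) • (0 : WeakDual ℝ Y)) - g u₀) * (((β : ℝ)⁻¹ : ℝ) : EReal) = 0 := by
    intro β
    rw [smul_zero, add_zero, hG0, ← EReal.coe_sub, sub_self, EReal.coe_zero, zero_mul]
  have : Nonempty {a : ℝ // 0 < a} := ⟨⟨1, one_pos⟩⟩
  rw [recFun]
  simp only [hconst, iSup_const]

/-- The epigraph of `g` is convex. -/
theorem epi_convex (g : WeakDual ℝ Y → EReal)
    (hcvx : ∀ x y : WeakDual ℝ Y, ∀ a b : ℝ, 0 ≤ a → 0 ≤ b → a + b = 1 →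
      g (a • x + b • y) ≤ (a : EReal) * g x + (b : EReal) * g y)
    (hproper₁ : ∀ u, g u ≠ ⊥) :
    Convex ℝ {p : WeakDual ℝ Y × ℝ | g p.1 ≤ (p.2 : EReal)} := by
  rintro ⟨v, s⟩ hv ⟨w, t⟩ hw a b ha hb hab
  simp only [Set.mem_setOf_eq] at hv hw ⊢
  rcases eq_or_lt_of_le ha with rfl | ha'
  · simp only [zero_add] at hab; subst hab; simpa using hw
  rcases eq_or_lt_of_le hb with rfl | hb'
  · simp only [add_zero] at hab; subst hab; simpa using hv
  have hvr : g v ≠ ⊤ := ne_top_of_le_ne_top (EReal.coe_ne_top s) hv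
  have hwr : g w ≠ ⊤ := ne_top_of_le_ne_top (EReal.coe_ne_top t) hw
  obtain ⟨V, hV⟩ : ∃ V : ℝ, g v = (V : EReal) :=
    ⟨(g v).toReal, (EReal.coe_toReal hvr (hproper₁ v)).symm⟩
  obtain ⟨W, hW⟩ : ∃ W : ℝ, g w = (W : EReal) :=
    ⟨(g w).toReal, (EReal.coe_toReal hwr (hproper₁ w)).symm⟩
  have h1 := hcvx v w a b ha hb hab
  rw [hV, hW, ← EReal.coe_mul, ← EReal.coe_mul, ← EReal.coe_add] at h1
  refine le_trans h1 ?_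
  show ((a * V + b * W : ℝ) : EReal) ≤ (((a • (v, s) + b • (w, t)) : WeakDual ℝ Y × ℝ).2 : EReal)
  have hVs : V ≤ s := by rw [hV] at hv; exact_mod_cast hv
  have hWt : W ≤ t := by rw [hW] at hw; exact_mod_cast hw
  have h2 : ((a • (v, s) + b • (w, t)) : WeakDual ℝ Y × ℝ).2 = a * s + b * t := rfl
  rw [h2]
  exact_mod_cast add_le_add (mul_le_mul_of_nonneg_left hVs ha) (mul_le_mul_of_nonneg_left hWt hb)

/-- The domain of the conjugate is convex. -/
theorem dom_convex (g : WeakDual ℝ Y → EReal)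
    (hproper₁ : ∀ u, g u ≠ ⊥) :
    Convex ℝ {y : Y | conjDual g y ≠ ⊤} := by
  intro y hy z hz a b ha hb hab
  simp only [Set.mem_setOf_eq] at hy hz ⊢
  rcases eq_or_lt_of_le ha with rfl | ha'
  · simp only [zero_add] at hab; subst hab; simpa using hz
  rcases eq_or_lt_of_le hb with rfl | hb'
  · simp only [add_zero] at hab; subst hab; simpa using hy
  set Cy : ℝ := (conjDual g y).toReal with hCy
  set Cz : ℝ := (conjDual g z).toReal with hCz
  have hCy' : conjDual g y ≤ (Cy : EReal) := EReal.le_coe_toReal hy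
  have hCz' : conjDual g z ≤ (Cz : EReal) := EReal.le_coe_toReal hz
  refine ne_top_of_le_ne_top (EReal.coe_ne_top (a * Cy + b * Cz)) (iSup_le fun w => ?_)
  by_cases hw : g w = ⊤
  · rw [hw, EReal.sub_top]; exact bot_le
  · obtain ⟨G, hG⟩ : ∃ G : ℝ, g w = (G : EReal) :=
      ⟨(g w).toReal, (EReal.coe_toReal hw (hproper₁ w)).symm⟩
    have h1 : ((w y : ℝ) : EReal) - g w ≤ (Cy : EReal) :=
      le_trans (le_iSup (fun u' : WeakDual ℝ Y => ((u' y : ℝ) : EReal) - g u') w) hCy'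
    have h2 : ((w z : ℝ) : EReal) - g w ≤ (Cz : EReal) :=
      le_trans (le_iSup (fun u' : WeakDual ℝ Y => ((u' z : ℝ) : EReal) - g u') w) hCz'
    rw [hG, ← EReal.coe_sub, EReal.coe_le_coe_iff] at h1 h2
    have h3 : w (a • y + b • z) = a * w y + b * w z := by
      rw [map_add, map_smul, map_smul]; rfl
    rw [h3, hG, ← EReal.coe_sub, EReal.coe_le_coe_iff]
    have h4 : a * (w y - G) ≤ a * Cy := mul_le_mul_of_nonneg_left h1 ha
    have h5 : b * (w z - G) ≤ b * Cz := mul_le_mul_of_nonneg_left h2 hb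
    have h6 : a * w y + b * w z - G = a * (w y - G) + b * (w z - G) := by
      have hab' : a + b = 1 := hab
      have : a * G + b * G = G := by rw [← add_mul, hab', one_mul]
      linarith [this]
    rw [h6]
    linarith

end Aux

open Classical in
/-- For a closed proper convex function `g` on the dual `U = Y*` of a Banach space `Y`
(with its weak* topology), `g` is coercive (`g^∞ = δ_{{0}}`) if and only if `dom g*` is
dense in `Y`. -/
theorem coercive_iff_dense_domain_conjugate
    {Y : Type*} [NormedAddCommGroup Y] [NormedSpace ℝ Y] [CompleteSpace Y]
    (g : WeakDual ℝ Y → EReal)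
    -- g is closed (weak*-lsc) proper convex
    (hlsc : LowerSemicontinuous g)
    (hcvx : ∀ x y : WeakDual ℝ Y, ∀ a b : ℝ, 0 ≤ a → 0 ≤ b → a + b = 1 →
      g (a • x + b • y) ≤ (a : EReal) * g x + (b : EReal) * g y)
    (hproper₁ : ∀ u, g u ≠ ⊥)
    (u₀ : WeakDual ℝ Y) (hu₀ : g u₀ ≠ ⊤) :
    (∀ u : WeakDual ℝ Y, recFun g u₀ u = if u = 0 then (0 : EReal) else ⊤) ↔
      Dense {y : Y | conjDual g y ≠ ⊤} := by
  have hcvxE : Convex ℝ {p : WeakDual ℝ Y × ℝ | g p.1 ≤ (p.2 : EReal)} :=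
    epi_convex g hcvx hproper₁
  constructor
  · intro hc
    by_contra hnd
    obtain ⟨yb, K, hbar⟩ := exists_dom g hlsc hcvxE hproper₁ u₀ hu₀
    have hybD : conjDual g yb ≠ ⊤ :=
      ne_top_of_le_ne_top (EReal.coe_ne_top K) (conj_le_of_bound g hproper₁ yb K hbar)
    obtain ⟨y₀, hy₀⟩ : ∃ y₀ : Y, y₀ ∉ closure {y : Y | conjDual g y ≠ ⊤} := by
      by_contra h
      push_neg at h
      exact hnd (by rwa [dense_iff_closure_eq, Set.eq_univ_iff_forall])
    obtain ⟨f, ρ, hfa, hfρ⟩ :=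
      geometric_hahn_banach_closed_point
        ((dom_convex g hproper₁).closure) isClosed_closure hy₀
    set u : WeakDual ℝ Y := StrongDual.toWeakDual f with hudef
    have hu_app : ∀ z : Y, u z = f z := fun _ => rfl
    have hune : u ≠ 0 := by
      intro h0
      have h1 : f yb < ρ := hfa yb (subset_closure hybD)
      have h2 : ρ < f y₀ := hfρ
      have h3 : f yb = u yb := rfl
      have h4 : f y₀ = u y₀ := rfl
      rw [h3, h0] at h1
      rw [h4, h0] at h2
      have h5 : (0 : WeakDual ℝ Y) yb = 0 := rfl
      have h6 : (0 : WeakDual ℝ Y) y₀ = 0 := rfl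
      rw [h5] at h1
      rw [h6] at h2
      linarith
    have hle : recFun g u₀ u ≤ (ρ : EReal) := by
      refine recFun_le g hlsc hcvxE hproper₁ u₀ hu₀ u ρ ?_
      intro y hy
      rw [hu_app]
      exact (hfa y (subset_closure hy)).le
    have htop := hc u
    rw [if_neg hune] at htop
    rw [htop] at hle
    exact absurd hle (by simp)
  · intro hd u
    by_cases h0 : u = 0
    · rw [if_pos h0, h0]
      exact rec_zero g hproper₁ u₀ hu₀
    · rw [if_neg h0]
      rw [EReal.eq_top_iff_forall_lt]
      intro M
      have hcont : Continuous fun z : Y => u z := (WeakDual.toStrongDual u).continuous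
      have hUopen : IsOpen {z : Y | M < u z} := isOpen_lt continuous_const hcont
      have hne : {z : Y | M < u z}.Nonempty := by
        obtain ⟨z₀, hz₀⟩ : ∃ z₀ : Y, u z₀ ≠ 0 := by
          by_contra h
          push_neg at h
          exact h0 (DFunLike.ext _ _ fun z => by rw [h z]; rfl)
        refine ⟨((M + 1) / u z₀) • z₀, ?_⟩
        have : u (((M + 1) / u z₀) • z₀) = ((M + 1) / u z₀) * u z₀ := by
          rw [map_smul]; rfl
        rw [Set.mem_setOf_eq, this, div_mul_cancel₀ _ hz₀]
        linarith
      obtain ⟨y, hyD, hyU⟩ := hd.exists_mem_open hUopen hne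
      have h1 : (M : EReal) < ((u y : ℝ) : EReal) := by exact_mod_cast hyU
      exact lt_of_lt_of_le h1 (rec_ge g hproper₁ u₀ hu₀ u y hyD)
end
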